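/- Let G be a digraph without loops, and let A and B be minimal spanning subgraphs of G that are not multipaths, with E(A) ∩ E(B) ≠ ∅. Suppose that A contains a linear sink or a linear source, that B contains a coherently oriented cycle, and that the cycle contained in B is the unique coherently oriented cycle in A ∪ B. Then there exists an edge x ∈ E(A) ∩ E(B) such that the spanning subgraph with edge set E(A) ∪ E(B) \ {x} is a multipath of G. -/

import Mathlib

set_option autoImplicit false

noncomputable section

attribute [local instance] Classical.propDecidable

/-- A (finite) directed multigraph: finitely many vertices and edges, each edge
has a source and a target.  (Loops and, a priori, parallel edges are allowed;
the paper's convention of at most one edge between an ordered pair of distinct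
vertices is imposed via `DiGraph.EdgeUnique`.) -/
structure DiGraph where
  V : Type
  E : Type
  [fintV : Fintype V]
  [decV : DecidableEq V]
  [fintE : Fintype E]
  [decE : DecidableEq E]
  s : E → V
  t : E → V

attribute [instance] DiGraph.fintV DiGraph.decV DiGraph.fintE DiGraph.decE

namespace DiGraph

/-- For each ordered pair of *distinct* vertices there is at most one edge. -/
def EdgeUnique (G : DiGraph) : Prop :=
  ∀ e f : G.E, G.s e = G.s f → G.t e = G.t f → G.s e ≠ G.t e → e = f

/-- G has no loops. -/
def Loopless (G : DiGraph) : Prop := ∀ e : G.E, G.s e ≠ G.t e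

/-- A coherently oriented cycle, given as the (cyclically ordered) list of its
edges: the list is nonempty, has no repeated edges, visits no vertex twice,
and the target of each edge is the source of the next one (cyclically).
A loop is a coherently oriented cycle of length 1. -/
def IsCohCycle (G : DiGraph) (c : List G.E) : Prop :=
  c ≠ [] ∧ c.Nodup ∧ (c.map G.s).Nodup ∧
    ∀ i : Fin c.length,
      G.t (c.get i) =
        G.s (c.get ⟨(i.val + 1) % c.length,
          Nat.mod_lt _ (Nat.lt_of_le_of_lt (Nat.zero_le _) i.isLt)⟩)

/-- `m` is (the edge set of) a multipath of `G`: the corresponding spanning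
subgraph has no loops, in-degree and out-degree at most one at each vertex, and
contains no coherently oriented cycle; equivalently, every connected component
is a single vertex or a simple (directed) path. -/
def IsMultipath (G : DiGraph) (m : Finset G.E) : Prop :=
  (∀ e ∈ m, G.s e ≠ G.t e) ∧
  (∀ e ∈ m, ∀ f ∈ m, G.s e = G.s f → e = f) ∧
  (∀ e ∈ m, ∀ f ∈ m, G.t e = G.t f → e = f) ∧
  ¬∃ c : List G.E, IsCohCycle G c ∧ ∀ g ∈ c, g ∈ m

/-- The forbidden pattern (A): vertices v0,v1,v2 and edges (v1,v0), (v0,v2), (v1,v2). -/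
def HasPatternA (G : DiGraph) : Prop :=
  ∃ v0 v1 v2 : G.V, v0 ≠ v1 ∧ v0 ≠ v2 ∧ v1 ≠ v2 ∧
    (∃ e : G.E, G.s e = v1 ∧ G.t e = v0) ∧
    (∃ e : G.E, G.s e = v0 ∧ G.t e = v2) ∧
    (∃ e : G.E, G.s e = v1 ∧ G.t e = v2)

/-- The reverse of pattern (A). -/
def HasPatternArev (G : DiGraph) : Prop :=
  ∃ v0 v1 v2 : G.V, v0 ≠ v1 ∧ v0 ≠ v2 ∧ v1 ≠ v2 ∧
    (∃ e : G.E, G.s e = v0 ∧ G.t e = v1) ∧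
    (∃ e : G.E, G.s e = v2 ∧ G.t e = v0) ∧
    (∃ e : G.E, G.s e = v2 ∧ G.t e = v1)

/-- The forbidden pattern (B): vertices v0,v1,v2,v3 and edges (v0,v1), (v2,v1), (v2,v3). -/
def HasPatternB (G : DiGraph) : Prop :=
  ∃ v0 v1 v2 v3 : G.V,
    v0 ≠ v1 ∧ v0 ≠ v2 ∧ v0 ≠ v3 ∧ v1 ≠ v2 ∧ v1 ≠ v3 ∧ v2 ≠ v3 ∧
    (∃ e : G.E, G.s e = v0 ∧ G.t e = v1) ∧
    (∃ e : G.E, G.s e = v2 ∧ G.t e = v1) ∧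
    (∃ e : G.E, G.s e = v2 ∧ G.t e = v3)

/-- The reverse of pattern (B). -/
def HasPatternBrev (G : DiGraph) : Prop :=
  ∃ v0 v1 v2 v3 : G.V,
    v0 ≠ v1 ∧ v0 ≠ v2 ∧ v0 ≠ v3 ∧ v1 ≠ v2 ∧ v1 ≠ v3 ∧ v2 ≠ v3 ∧
    (∃ e : G.E, G.s e = v1 ∧ G.t e = v0) ∧
    (∃ e : G.E, G.s e = v1 ∧ G.t e = v2) ∧
    (∃ e : G.E, G.s e = v3 ∧ G.t e = v2)

/-- (MP1): G contains no copy, up to reversing all orientations, of the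
patterns (A) and (B). -/
def MP1 (G : DiGraph) : Prop :=
  ¬HasPatternA G ∧ ¬HasPatternArev G ∧ ¬HasPatternB G ∧ ¬HasPatternBrev G

/-- (MP2): every coherently oriented cycle of length ≥ 2 (i.e. loops excluded)
is a connected component: any edge incident to a vertex of the cycle belongs
to the cycle. -/
def MP2 (G : DiGraph) : Prop :=
  ∀ c : List G.E, IsCohCycle G c → 2 ≤ c.length →
    ∀ f : G.E, (∃ g ∈ c, G.s g = G.s f ∨ G.s g = G.t f) → f ∈ c

def IsMPDigraph (G : DiGraph) : Prop := MP1 G ∧ MP2 G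

/-- The axioms (I1), (I2), (I3) for a family of independent sets of a matroid. -/
def IsIndepFamily {α : Type} [DecidableEq α] (I : Finset α → Prop) : Prop :=
  I ∅ ∧ (∀ A B : Finset α, I A → B ⊆ A → I B) ∧
    ∀ A B : Finset α, I A → I B → B.card < A.card →
      ∃ x ∈ A, x ∉ B ∧ I (insert x B)

/-- `m` is the edge set of a linear sink (two non-loop edges with a common
target and distinct sources). -/
def IsLinearSinkSet (G : DiGraph) (m : Finset G.E) : Prop :=
  ∃ e1 e2 : G.E, e1 ≠ e2 ∧ m = {e1, e2} ∧ G.t e1 = G.t e2 ∧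
    G.s e1 ≠ G.s e2 ∧ G.s e1 ≠ G.t e1 ∧ G.s e2 ≠ G.t e2

/-- `m` is the edge set of a linear source (two non-loop edges with a common
source and distinct targets). -/
def IsLinearSourceSet (G : DiGraph) (m : Finset G.E) : Prop :=
  ∃ e1 e2 : G.E, e1 ≠ e2 ∧ m = {e1, e2} ∧ G.s e1 = G.s e2 ∧
    G.t e1 ≠ G.t e2 ∧ G.s e1 ≠ G.t e1 ∧ G.s e2 ≠ G.t e2

/-- `m` is the edge set of a coherently oriented cycle (possibly a loop). -/
def IsCohCycleSet (G : DiGraph) (m : Finset G.E) : Prop :=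
  ∃ c : List G.E, IsCohCycle G c ∧ m = c.toFinset

/-- Two vertices are adjacent if they are the endpoints of a common edge. -/
def adj (G : DiGraph) (v w : G.V) : Prop :=
  ∃ e : G.E, (G.s e = v ∧ G.t e = w) ∨ (G.s e = w ∧ G.t e = v)

/-- Two vertices lie in the same connected component. -/
def connRel (G : DiGraph) : G.V → G.V → Prop := Relation.EqvGen (adj G)

/-- G is connected. -/
def ConnectedD (G : DiGraph) : Prop := Nonempty G.V ∧ ∀ v w : G.V, connRel G v w

/-- The number of connected components of G (isolated vertices count). -/
def numComponents (G : DiGraph) : ℕ :=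
  Nat.card (Quotient (Relation.EqvGen.setoid (adj G)))

/-- `S` is the set of edges of one of the connected components of `G`. -/
def IsComponentEdges (G : DiGraph) (S : Finset G.E) : Prop :=
  ∃ v : G.V, S = Finset.univ.filter (fun e => connRel G v (G.s e))

/-- in-degree of `v` in the subgraph spanned by the edges of `R`. -/
def indegIn (G : DiGraph) (R : Finset G.E) (v : G.V) : ℕ :=
  (R.filter (fun e => G.t e = v)).card

/-- out-degree of `v` in the subgraph spanned by the edges of `R`. -/
def outdegIn (G : DiGraph) (R : Finset G.E) (v : G.V) : ℕ :=
  (R.filter (fun e => G.s e = v)).card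

def indeg (G : DiGraph) (v : G.V) : ℕ := indegIn G Finset.univ v
def outdeg (G : DiGraph) (v : G.V) : ℕ := outdegIn G Finset.univ v

/-- `v` is a vertex of the subgraph spanned by the edge set `R`. -/
def IncidentTo (G : DiGraph) (R : Finset G.E) (v : G.V) : Prop :=
  ∃ e ∈ R, G.s e = v ∨ G.t e = v

/-- `v` is stable in the subgraph spanned by `R`. -/
def StableIn (G : DiGraph) (R : Finset G.E) (v : G.V) : Prop :=
  indegIn G R v = 0 ∨ outdegIn G R v = 0

/-- `v` is unstable in `G`. -/
def UnstableG (G : DiGraph) (v : G.V) : Prop :=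
  0 < indeg G v ∧ 0 < outdeg G v

/-- adjacency within the subgraph spanned by `R`. -/
def adjIn (G : DiGraph) (R : Finset G.E) (a b : G.V) : Prop :=
  ∃ g ∈ R, (G.s g = a ∧ G.t g = b) ∨ (G.s g = b ∧ G.t g = a)

/-- The subgraph spanned by the edge set `R` is connected. -/
def EdgeConnected (G : DiGraph) (R : Finset G.E) : Prop :=
  ∀ e ∈ R, ∀ f ∈ R, Relation.EqvGen (adjIn G R) (G.s e) (G.s f)

/-- `R` spans a dynamical region of `G`: it is connected, has at least one
edge, every boundary vertex is unstable in `G` but stable in `R` and in its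
complement, and no edge of `R` lies on an oriented cycle of `G` not contained
in `R`. -/
def IsDynRegion (G : DiGraph) (R : Finset G.E) : Prop :=
  R.Nonempty ∧ EdgeConnected G R ∧
  (∀ v : G.V, IncidentTo G R v → IncidentTo G (Finset.univ \ R) v →
     UnstableG G v ∧ StableIn G R v ∧ StableIn G (Finset.univ \ R) v) ∧
  (∀ c : List G.E, IsCohCycle G c → (∃ g ∈ c, g ∈ R) → ∀ g ∈ c, g ∈ R)

/-- A dynamical module is a minimal dynamical region. -/
def IsDynModule (G : DiGraph) (R : Finset G.E) : Prop :=
  IsDynRegion G R ∧ ∀ R' ⊆ R, IsDynRegion G R' → R' = R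

/-- `G` is a sink on `n+1` vertices. -/
def IsSinkGraph (G : DiGraph) : Prop :=
  Loopless G ∧ Fintype.card G.V = Fintype.card G.E + 1 ∧
    ∃! v : G.V, ∀ e : G.E, G.t e = v

/-- `G` is a source on `n+1` vertices. -/
def IsSourceGraph (G : DiGraph) : Prop :=
  Loopless G ∧ Fintype.card G.V = Fintype.card G.E + 1 ∧
    ∃! v : G.V, ∀ e : G.E, G.s e = v

/-- `R` spans a sink: all its edges are non-loops with a common target and
pairwise distinct sources. -/
def IsSinkSet (G : DiGraph) (R : Finset G.E) : Prop :=
  ∃ v : G.V, (∀ e ∈ R, G.t e = v ∧ G.s e ≠ v) ∧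
    ∀ e ∈ R, ∀ f ∈ R, G.s e = G.s f → e = f

/-- `R` spans a source. -/
def IsSourceSet (G : DiGraph) (R : Finset G.E) : Prop :=
  ∃ v : G.V, (∀ e ∈ R, G.s e = v ∧ G.t e ≠ v) ∧
    ∀ e ∈ R, ∀ f ∈ R, G.t e = G.t f → e = f

/-- The whole digraph `G` is a coherently oriented cycle. -/
def IsCohCycleGraph (G : DiGraph) : Prop :=
  ∃ c : List G.E, IsCohCycle G c ∧ (∀ e : G.E, e ∈ c) ∧
    ∀ v : G.V, ∃ g ∈ c, G.s g = v

/-- Rank function of the multipath matroid: the size of a largest multipath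
contained in `A`. -/
def mrank (G : DiGraph) (A : Finset G.E) : ℕ :=
  (A.powerset.filter (fun m => IsMultipath G m)).sup Finset.card

/-- The Tutte polynomial of the multipath matroid of `G`, evaluated at `(x,y)`. -/
def tutte (G : DiGraph) (x y : ℤ) : ℤ :=
  ∑ A : Finset G.E,
    (x - 1) ^ (mrank G Finset.univ - mrank G A) *
      (y - 1) ^ (A.card - mrank G A)

/-- `e` is a loop of the multipath matroid. -/
def IsMatroidLoop (G : DiGraph) (e : G.E) : Prop := ¬IsMultipath G {e}

/-- `e` is a coloop of the multipath matroid: it belongs to every maximal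
independent set. -/
def IsColoop (G : DiGraph) (e : G.E) : Prop :=
  ∀ m : Finset G.E, IsMultipath G m →
    (∀ m' : Finset G.E, IsMultipath G m' → m ⊆ m' → m' = m) → e ∈ m

/-- The digraph obtained from `G` by deleting the edge `e`. -/
def deleteEdge (G : DiGraph) (e : G.E) : DiGraph where
  V := G.V
  E := {f : G.E // f ≠ e}
  s := fun f => G.s f.val
  t := fun f => G.t f.val

/-- The vertex set of the MP-contraction `G ⫽ e`: the vertices of `G` other
than the endpoints of `e`, together with a new vertex `x = Sum.inr ()`. -/
def CVert (G : DiGraph) (e : G.E) : Type :=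
  {u : G.V // u ≠ G.s e ∧ u ≠ G.t e} ⊕ Unit

instance (G : DiGraph) (e : G.E) : Fintype (CVert G e) := by
  unfold CVert; infer_instance

instance (G : DiGraph) (e : G.E) : DecidableEq (CVert G e) := by
  unfold CVert; infer_instance

/-- Source, in `G ⫽ e`, of the edge coming from the edge `f` of `G`
(for `e = (v,w)`, the new source is `x` iff `s f ∈ {v,w}` or `t f = w`). -/
def contrS (G : DiGraph) (e f : G.E) : CVert G e :=
  if h : G.s f = G.s e ∨ G.s f = G.t e ∨ G.t f = G.t e then Sum.inr ()
  else Sum.inl ⟨G.s f, by push_neg at h; exact ⟨h.1, h.2.1⟩⟩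

/-- Target, in `G ⫽ e`, of the edge coming from the edge `f` of `G`
(for `e = (v,w)`, the new target is `x` iff `t f ∈ {v,w}` or `s f = v`). -/
def contrT (G : DiGraph) (e f : G.E) : CVert G e :=
  if h : G.t f = G.s e ∨ G.t f = G.t e ∨ G.s f = G.s e then Sum.inr ()
  else Sum.inl ⟨G.t f, by push_neg at h; exact ⟨h.1, h.2.1⟩⟩

/-- The MP-contraction `G ⫽ e`. -/
def mpContract (G : DiGraph) (e : G.E) : DiGraph where
  V := CVert G e
  E := {f : G.E // f ≠ e}
  s := fun f => contrS G e f.val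
  t := fun f => contrT G e f.val

/-- The digraph `C̃_e(G)`: the MP-contraction `G ⫽ e` with all loops at the
new vertex `x` deleted. -/
def tildeC (G : DiGraph) (e : G.E) : DiGraph where
  V := CVert G e
  E := {f : G.E // f ≠ e ∧
         ¬(contrS G e f = Sum.inr () ∧ contrT G e f = Sum.inr ())}
  s := fun f => contrS G e f.val
  t := fun f => contrT G e f.val

/-- The classical contraction `G / e` of a non-loop edge `e = (v,w)`:
identify `w` with `v` and delete `e`. -/
def contractClassical (G : DiGraph) (e : G.E) (hne : G.s e ≠ G.t e) : DiGraph where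
  V := {u : G.V // u ≠ G.t e}
  E := {f : G.E // f ≠ e}
  s := fun f => if h : G.s f.val = G.t e then ⟨G.s e, hne⟩ else ⟨G.s f.val, h⟩
  t := fun f => if h : G.t f.val = G.t e then ⟨G.s e, hne⟩ else ⟨G.t f.val, h⟩

/-- A flowing k-colouring of `G`. -/
def IsFlowing (G : DiGraph) (k : ℕ) (c : G.V → Fin k) : Prop :=
  (∀ e : G.E, c (G.s e) ≠ c (G.t e)) ∧
  (∀ e f : G.E, G.t e = G.t f → c (G.s e) = c (G.s f)) ∧
  (∀ e f : G.E, G.s e = G.s f → c (G.t e) = c (G.t f))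

/-- The number of flowing k-colourings of `G`. -/
def tau (G : DiGraph) (k : ℕ) : ℕ :=
  Nat.card {c : G.V → Fin k // IsFlowing G k c}

/-- The spanning subgraph of `G` with edge set `S`. -/
def subgraphOn (G : DiGraph) (S : Finset G.E) : DiGraph where
  V := G.V
  E := {f : G.E // f ∈ S}
  s := fun f => G.s f.val
  t := fun f => G.t f.val

/-- The underlying undirected multigraph of `G` contains a cycle
(of length ≥ 1; a single loop, or two parallel/antiparallel edges, count). -/
def HasUndirCycle (G : DiGraph) : Prop :=
  ∃ (n : ℕ) (ed : Fin n → G.E) (vx : Fin n → G.V),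
    0 < n ∧ Function.Injective ed ∧ Function.Injective vx ∧
    ∀ i : Fin n,
      (G.s (ed i) = vx i ∧ G.t (ed i) = vx ⟨(i.val + 1) % n, Nat.mod_lt _ i.pos⟩) ∨
      (G.t (ed i) = vx i ∧ G.s (ed i) = vx ⟨(i.val + 1) % n, Nat.mod_lt _ i.pos⟩)

/-- The underlying undirected multigraph of `G` is a forest. -/
def IsForestD (G : DiGraph) : Prop := ¬HasUndirCycle G

/-- The underlying undirected multigraph of `G` is a tree. -/
def IsTreeD (G : DiGraph) : Prop := ConnectedD G ∧ IsForestD G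

/-- The multipath matroid of `G` is representable over the field `F`. -/
def RepOver (G : DiGraph) (F : Type) [Field F] : Prop :=
  ∃ (n : ℕ) (N : Matrix (Fin n) G.E F),
    ∀ m : Finset G.E, IsMultipath G m ↔
      LinearIndependent F (fun f : {x : G.E // x ∈ m} => N.transpose f.val)

end DiGraph

/-- A finite undirected multigraph. -/
structure Multigraph where
  V : Type
  E : Type
  [fintV : Fintype V]
  [decV : DecidableEq V]
  [fintE : Fintype E]
  [decE : DecidableEq E]
  ends : E → Sym2 V

attribute [instance] Multigraph.fintV Multigraph.decV Multigraph.fintE Multigraph.decE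

/-- The multigraph `M` has a cycle all of whose edges lie in `F`. -/
def Multigraph.HasCycleIn (M : Multigraph) (F : Finset M.E) : Prop :=
  ∃ (n : ℕ) (ed : Fin n → M.E) (vx : Fin n → M.V),
    0 < n ∧ Function.Injective ed ∧ Function.Injective vx ∧
    (∀ i : Fin n, ed i ∈ F) ∧
    ∀ i : Fin n, M.ends (ed i) = s(vx i, vx ⟨(i.val + 1) % n, Nat.mod_lt _ i.pos⟩)

namespace DiGraph

private lemma listGetCongr {α : Type} (l : List α) {i j : ℕ} (hi : i < l.length)
    (hj : j < l.length) (h : i = j) : l[i]'hi = l[j]'hj := by subst h; rfl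

private lemma succ_mod_inj {n i j : ℕ} (hi : i < n) (hj : j < n)
    (h : (i + 1) % n = (j + 1) % n) : i = j := by
  rcases Nat.lt_or_ge (i + 1) n with h1 | h1
  · rcases Nat.lt_or_ge (j + 1) n with h2 | h2
    · rw [Nat.mod_eq_of_lt h1, Nat.mod_eq_of_lt h2] at h; omega
    · have hj1 : j + 1 = n := by omega
      rw [Nat.mod_eq_of_lt h1, hj1, Nat.mod_self] at h; omega
  · have hi1 : i + 1 = n := by omega
    rcases Nat.lt_or_ge (j + 1) n with h2 | h2
    · rw [hi1, Nat.mod_self, Nat.mod_eq_of_lt h2] at h; omega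
    · omega

private lemma cyc_step (G : DiGraph) {cl : List G.E} (hc : G.IsCohCycle cl) {i : ℕ}
    (h : i < cl.length) :
    G.t (cl[i]'h) = G.s (cl[(i + 1) % cl.length]'(Nat.mod_lt _ (by omega))) := by
  have h2 := hc.2.2.2 ⟨i, h⟩
  simpa [List.get_eq_getElem] using h2

private lemma cyc_src_inj (G : DiGraph) {cl : List G.E} (hc : G.IsCohCycle cl) :
    ∀ e ∈ cl, ∀ f ∈ cl, G.s e = G.s f → e = f :=
  fun _ he _ hf h => List.inj_on_of_nodup_map hc.2.2.1 he hf h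

private lemma cyc_tgt_inj (G : DiGraph) {cl : List G.E} (hc : G.IsCohCycle cl) :
    ∀ e ∈ cl, ∀ f ∈ cl, G.t e = G.t f → e = f := by
  intro e he f hf h
  obtain ⟨i, hilt, hi⟩ := List.getElem_of_mem he
  obtain ⟨j, hjlt, hj⟩ := List.getElem_of_mem hf
  subst hi hj
  rw [cyc_step G hc hilt, cyc_step G hc hjlt] at h
  have h3 := List.inj_on_of_nodup_map hc.2.2.1 (List.getElem_mem _) (List.getElem_mem _) h
  have h4 : (i + 1) % cl.length = (j + 1) % cl.length := by
    have h5 : cl.get ⟨(i + 1) % cl.length, Nat.mod_lt _ (by omega)⟩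
        = cl.get ⟨(j + 1) % cl.length, Nat.mod_lt _ (by omega)⟩ := by
      simpa [List.get_eq_getElem] using h3
    exact congrArg Fin.val ((hc.2.1.get_inj_iff).mp h5)
  exact listGetCongr cl hilt hjlt (succ_mod_inj hilt hjlt h4)

private lemma getElem_rotate' {α : Type} (l : List α) (m i : ℕ)
    (h : i < (l.rotate m).length) :
    (l.rotate m)[i]'h
      = l[(i + m) % l.length]'(Nat.mod_lt _ (by rw [List.length_rotate] at h; omega)) := by
  have h2 := List.get_rotate l m ⟨i, h⟩
  simpa [List.get_eq_getElem] using h2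

private lemma cohCycle_rotate (G : DiGraph) {cl : List G.E} (hc : G.IsCohCycle cl) (m : ℕ) :
    G.IsCohCycle (cl.rotate m) := by
  have hlen : (cl.rotate m).length = cl.length := cl.length_rotate m
  refine ⟨by simpa using hc.1, List.nodup_rotate.mpr hc.2.1, ?_, ?_⟩
  · rw [List.map_rotate]; exact List.nodup_rotate.mpr hc.2.2.1
  · rintro ⟨iv, hiv⟩
    have hn0 : 0 < cl.length := by omega
    simp only [List.get_eq_getElem]
    rw [getElem_rotate' cl m iv hiv,
      getElem_rotate' cl m _ (Nat.mod_lt _ (by omega)),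
      cyc_step G hc (Nat.mod_lt _ hn0)]
    apply congrArg
    apply listGetCongr
    rw [hlen, Nat.mod_add_mod, Nat.mod_add_mod]
    congr 1
    omega

private lemma coreLemma (G : DiGraph) (hll : G.Loopless) {cl : List G.E}
    (hc : G.IsCohCycle cl) {e2 a b : G.E} (he2 : e2 ∉ cl) (ha : a ∈ cl) (hb : b ∈ cl)
    (hs : G.s e2 = G.s a) (ht : G.t e2 = G.t b) :
    ∃ c' : List G.E, G.IsCohCycle c' ∧ e2 ∈ c' ∧ ∀ g ∈ c', g = e2 ∨ g ∈ cl := by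
  obtain ⟨k, hklt, hk⟩ := List.getElem_of_mem hb
  have hn0 : 0 < cl.length := by omega
  obtain ⟨d, hdDef⟩ : ∃ d, d = cl.rotate (k + 1) := ⟨_, rfl⟩
  have hdC : G.IsCohCycle d := hdDef ▸ cohCycle_rotate G hc _
  have hlen : d.length = cl.length := by rw [hdDef]; exact cl.length_rotate _
  have hdn0 : 0 < d.length := by omega
  have hmemd : ∀ g : G.E, g ∈ d ↔ g ∈ cl := by rw [hdDef]; exact fun g => List.mem_rotate
  have he2d : e2 ∉ d := fun h => he2 ((hmemd e2).mp h)
  have hdget : ∀ (i : ℕ) (h : i < d.length),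
      d[i]'h = cl[(i + (k + 1)) % cl.length]'(Nat.mod_lt _ hn0) := by
    subst hdDef
    intro i h
    exact getElem_rotate' cl (k + 1) i h
  have hbl : d[d.length - 1]'(by omega) = b := by
    rw [hdget _ (by omega), ← hk]
    apply listGetCongr
    have h1 : d.length - 1 + (k + 1) = cl.length + k := by omega
    rw [h1, Nat.add_mod_left, Nat.mod_eq_of_lt hklt]
  have hback : G.s (d[0]'hdn0) = G.t b := by
    have hstep := cyc_step G hdC (show d.length - 1 < d.length by omega)
    rw [hbl] at hstep
    rw [hstep]
    apply congrArg
    apply listGetCongr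
    have h1 : d.length - 1 + 1 = d.length := by omega
    rw [h1, Nat.mod_self]
  obtain ⟨p, hplt, hp⟩ := List.getElem_of_mem ((hmemd a).mpr ha)
  have hp0 : 0 < p := by
    rcases Nat.eq_zero_or_pos p with h0 | h0
    · exfalso
      apply hll e2
      rw [hs, ht, ← hp, ← hback]
      exact congrArg G.s (listGetCongr d hplt hdn0 h0)
    · exact h0
  have hLlen : (d.take p ++ [e2]).length = p + 1 := by
    simp [List.length_take, Nat.min_eq_left (le_of_lt hplt)]
  have hgetlt : ∀ j (hj : j < p),
      (d.take p ++ [e2])[j]'(by omega) = d[j]'(by omega) := by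
    intro j hj
    rw [List.getElem_append_left (by simp [List.length_take]; omega)]
    exact List.getElem_take
  have hgetp : (d.take p ++ [e2])[p]'(by omega) = e2 := by
    rw [List.getElem_append_right (by simp [List.length_take])]
    simp [List.length_take, Nat.min_eq_left (le_of_lt hplt)]
  refine ⟨d.take p ++ [e2], ⟨?_, ?_, ?_, ?_⟩, by simp, ?_⟩
  · simp
  · rw [List.nodup_append]
    refine ⟨(List.take_sublist _ _).nodup hdC.2.1, List.nodup_singleton e2, ?_⟩
    intro x hx y hy hx2
    rw [List.mem_singleton] at hy
    subst hy hx2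
    exact he2d ((List.take_sublist _ _).subset hx)
  · rw [List.map_append, List.nodup_append, List.map_take]
    refine ⟨(List.take_sublist _ _).nodup hdC.2.2.1, by simp, ?_⟩
    intro x hx y hy hx2
    simp only [List.map_cons, List.map_nil, List.mem_singleton] at hy
    subst hy hx2
    obtain ⟨q, hqlt, hq⟩ := List.getElem_of_mem hx
    have hqlt' : q < p := by
      have h5 := hqlt
      simp [List.length_take] at h5
      omega
    have hqd : q < (d.map G.s).length := by simp; omega
    have h1 : (d.map G.s)[q]'hqd = G.s e2 := by rw [← hq]; exact List.getElem_take.symm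
    have h2 : (d.map G.s)[p]'(by simp; omega) = G.s e2 := by
      rw [List.getElem_map, hp, hs]
    have h3 : (d.map G.s).get ⟨q, hqd⟩ = (d.map G.s).get ⟨p, by simp; omega⟩ := by
      simp only [List.get_eq_getElem]
      rw [h1, h2]
    have h4 := congrArg Fin.val ((hdC.2.2.1.get_inj_iff).mp h3)
    simp only [] at h4
    omega
  · rintro ⟨iv, hiv⟩
    have hi : iv < p + 1 := by omega
    simp only [List.get_eq_getElem]
    rcases Nat.lt_or_ge iv p with hip | hip
    · have hmod : (iv + 1) % (d.take p ++ [e2]).length = iv + 1 := by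
        rw [hLlen]; exact Nat.mod_eq_of_lt (by omega)
      have hL1 : (d.take p ++ [e2])[iv]'hiv = d[iv]'(by omega) := hgetlt iv hip
      have hstep := cyc_step G hdC (show iv < d.length by omega)
      have hmod2 : (iv + 1) % d.length = iv + 1 := Nat.mod_eq_of_lt (by omega)
      rw [hL1, hstep]
      have hL2 : (d.take p ++ [e2])[(iv + 1) % (d.take p ++ [e2]).length]'(Nat.mod_lt _ (by omega))
          = (d.take p ++ [e2])[iv + 1]'(by omega) := listGetCongr _ _ (by omega) hmod
      rw [hL2]
      rcases Nat.lt_or_ge (iv + 1) p with hip1 | hip1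
      · rw [hgetlt (iv + 1) hip1]
        apply congrArg
        exact listGetCongr d _ _ hmod2
      · have hip1' : iv + 1 = p := by omega
        have h6 : (d.take p ++ [e2])[iv + 1]'(by omega) = e2 :=
          (listGetCongr _ (by omega) (by omega) hip1').trans hgetp
        rw [h6, hs, ← hp]
        apply congrArg
        exact listGetCongr d _ _ (by omega)
    · have hip' : iv = p := by omega
      have hL1 : (d.take p ++ [e2])[iv]'hiv = e2 :=
        (listGetCongr _ _ (by omega) hip').trans hgetp
      have hmod : (iv + 1) % (d.take p ++ [e2]).length = 0 := by
        rw [hLlen, hip']; simp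
      have hL2 : (d.take p ++ [e2])[(iv + 1) % (d.take p ++ [e2]).length]'(Nat.mod_lt _ (by omega))
          = (d.take p ++ [e2])[0]'(by omega) := listGetCongr _ _ (by omega) hmod
      rw [hL1, hL2, ht, ← hback]
      apply congrArg
      rw [hgetlt 0 hp0]
  · intro g hg
    rw [List.mem_append] at hg
    rcases hg with h | h
    · exact Or.inr ((hmemd g).mp ((List.take_sublist _ _).subset h))
    · rw [List.mem_singleton] at h; exact Or.inl h


private lemma assemble (G : DiGraph) (hll : G.Loopless) (A B : Finset G.E)
    (cl : List G.E) (hc : G.IsCohCycle cl) (hBc : ∀ g, g ∈ cl ↔ g ∈ B)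
    (e1 e2 : G.E) (hAe : A = {e1, e2}) (he1 : e1 ∈ B) (he2 : e2 ∉ B)
    (hkey : G.t e2 = G.t e1 ∨ G.s e2 = G.s e1)
    (huniq : ∀ c' : List G.E, G.IsCohCycle c' → (∀ g ∈ c', g ∈ A ∪ B) →
      c'.toFinset = cl.toFinset) :
    ∃ x ∈ A ∩ B, G.IsMultipath ((A ∪ B) \ {x}) := by
  have hne : e1 ≠ e2 := fun h => he2 (h ▸ he1)
  have he2A : e2 ∈ A := by simp [hAe]
  have he2c : e2 ∉ cl := fun h => he2 ((hBc e2).mp h)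
  have he1c : e1 ∈ cl := (hBc e1).mpr he1
  have hcup : ∀ g, g ∈ (A ∪ B) \ {e1} ↔ (g = e2 ∨ (g ∈ B ∧ g ≠ e1)) := by
    intro g
    simp only [Finset.mem_sdiff, Finset.mem_union, Finset.mem_singleton, hAe,
      Finset.mem_insert]
    constructor
    · rintro ⟨(h | h) | h, hg⟩
      · exact absurd h hg
      · exact Or.inl h
      · exact Or.inr ⟨h, hg⟩
    · rintro (h | ⟨h, hg⟩)
      · exact ⟨Or.inl (Or.inr h), h ▸ (Ne.symm hne)⟩
      · exact ⟨Or.inr h, hg⟩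
  have hsclash : ∀ f ∈ B, f ≠ e1 → G.s e2 = G.s f → False := by
    intro f hf hfe1 hsf
    rcases hkey with hk | hk
    · -- sink: t e2 = t e1, build second cycle via coreLemma (a := f, b := e1)
      obtain ⟨c', hc', he2c', hmem⟩ := coreLemma G hll hc he2c ((hBc f).mpr hf) he1c hsf hk
      have := huniq c' hc' (fun g hg => by
        rcases hmem g hg with h | h
        · exact Finset.mem_union_left _ (h ▸ he2A)
        · exact Finset.mem_union_right _ ((hBc g).mp h))
      have h2 : e2 ∈ cl.toFinset := this ▸ (List.mem_toFinset.mpr he2c')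
      exact he2c (List.mem_toFinset.mp h2)
    · -- source: s e2 = s e1, so s f = s e1, hence f = e1
      exact hfe1 (cyc_src_inj G hc f ((hBc f).mpr hf) e1 he1c (hsf.symm.trans hk))
  have htclash : ∀ f ∈ B, f ≠ e1 → G.t e2 = G.t f → False := by
    intro f hf hfe1 htf
    rcases hkey with hk | hk
    · exact hfe1 (cyc_tgt_inj G hc f ((hBc f).mpr hf) e1 he1c (htf.symm.trans hk))
    · obtain ⟨c', hc', he2c', hmem⟩ := coreLemma G hll hc he2c he1c ((hBc f).mpr hf) hk htf
      have := huniq c' hc' (fun g hg => by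
        rcases hmem g hg with h | h
        · exact Finset.mem_union_left _ (h ▸ he2A)
        · exact Finset.mem_union_right _ ((hBc g).mp h))
      have h2 : e2 ∈ cl.toFinset := this ▸ (List.mem_toFinset.mpr he2c')
      exact he2c (List.mem_toFinset.mp h2)
  refine ⟨e1, by simp [hAe, he1, Finset.mem_inter], ?_, ?_, ?_, ?_⟩
  · intro e _
    exact hll e
  · intro e he f hf hsf
    rcases (hcup e).mp he with rfl | ⟨heB, hee1⟩
    · rcases (hcup f).mp hf with rfl | ⟨hfB, hfe1⟩
      · rfl
      · exact absurd hsf (fun h => hsclash f hfB hfe1 h)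
    · rcases (hcup f).mp hf with rfl | ⟨hfB, hfe1⟩
      · exact absurd hsf.symm (fun h => hsclash e heB hee1 h)
      · exact cyc_src_inj G hc e ((hBc e).mpr heB) f ((hBc f).mpr hfB) hsf
  · intro e he f hf htf
    rcases (hcup e).mp he with rfl | ⟨heB, hee1⟩
    · rcases (hcup f).mp hf with rfl | ⟨hfB, hfe1⟩
      · rfl
      · exact absurd htf (fun h => htclash f hfB hfe1 h)
    · rcases (hcup f).mp hf with rfl | ⟨hfB, hfe1⟩
      · exact absurd htf.symm (fun h => htclash e heB hee1 h)
      · exact cyc_tgt_inj G hc e ((hBc e).mpr heB) f ((hBc f).mpr hfB) htf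
  · rintro ⟨c'', hc'', hmem⟩
    have heq := huniq c'' hc'' (fun g hg => (Finset.sdiff_subset) (hmem g hg))
    have h2 : e1 ∈ c''.toFinset := heq ▸ (List.mem_toFinset.mpr he1c)
    have h3 := hmem e1 (List.mem_toFinset.mp h2)
    rw [Finset.mem_sdiff, Finset.mem_singleton] at h3
    exact h3.2 rfl

end DiGraph

open DiGraph in
/-- Let `G` be loopless and let `A, B` be minimal
non-multipath spanning subgraphs with a common edge; if `A` contains a linear
sink or source, `B` contains a coherently oriented cycle `c`, and `c` is the
unique coherently oriented cycle in `A ∪ B`, then there is an edge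
`x ∈ A ∩ B` such that `A ∪ B \ {x}` is a multipath. -/
theorem lemma_C2 (G : DiGraph) (hU : G.EdgeUnique) (hll : G.Loopless)
    (A B : Finset G.E)
    (hA : ¬G.IsMultipath A) (hAmin : ∀ m : Finset G.E, m ⊂ A → G.IsMultipath m)
    (hB : ¬G.IsMultipath B) (hBmin : ∀ m : Finset G.E, m ⊂ B → G.IsMultipath m)
    (hAB : (A ∩ B).Nonempty)
    (hsink : ∃ m : Finset G.E, m ⊆ A ∧ (IsLinearSinkSet G m ∨ IsLinearSourceSet G m))
    (c : List G.E) (hc : G.IsCohCycle c) (hcB : ∀ g ∈ c, g ∈ B)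
    (huniq : ∀ c' : List G.E, G.IsCohCycle c' → (∀ g ∈ c', g ∈ A ∪ B) →
      c'.toFinset = c.toFinset) :
    ∃ x ∈ A ∩ B, G.IsMultipath ((A ∪ B) \ {x}) := by
  classical
  obtain ⟨m, hmA, hm⟩ := hsink
  have hmnot : ¬ G.IsMultipath m := by
    rcases hm with ⟨x1, x2, hx, hmeq, hts, _⟩ | ⟨x1, x2, hx, hmeq, hts, _⟩
    · rintro ⟨_, _, h3, _⟩
      exact hx (h3 x1 (by simp [hmeq]) x2 (by simp [hmeq]) hts)
    · rintro ⟨_, h2, _⟩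
      exact hx (h2 x1 (by simp [hmeq]) x2 (by simp [hmeq]) hts)
  have hmAeq : m = A := by
    by_contra hneq
    exact hmnot (hAmin m (lt_of_le_of_ne hmA hneq))
  subst hmAeq
  have hcBsub : c.toFinset ⊆ B := fun g hg => hcB g (List.mem_toFinset.mp hg)
  have hcnot : ¬ G.IsMultipath c.toFinset := by
    rintro ⟨_, _, _, h4⟩
    exact h4 ⟨c, hc, fun g hg => List.mem_toFinset.mpr hg⟩
  have hBeq : c.toFinset = B := by
    by_contra hneq
    exact hcnot (hBmin _ (lt_of_le_of_ne hcBsub hneq))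
  have hBc : ∀ g, g ∈ c ↔ g ∈ B := fun g => by rw [← hBeq]; simp
  obtain ⟨y, hy⟩ := hAB
  rw [Finset.mem_inter] at hy
  rcases hm with ⟨x1, x2, hx12, hmeq, hkey1, hkey2, _, _⟩ |
    ⟨x1, x2, hx12, hmeq, hkey1, hkey2, _, _⟩
  · -- linear sink: t x1 = t x2
    have hnotboth : ¬(x1 ∈ B ∧ x2 ∈ B) := by
      rintro ⟨h1, h2⟩
      exact hx12 (cyc_tgt_inj G hc x1 ((hBc x1).mpr h1) x2 ((hBc x2).mpr h2) hkey1)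
    have hyA : y = x1 ∨ y = x2 := by
      have := hy.1
      rw [hmeq] at this
      simpa using this
    rcases hyA with h | h
    · have h1B : x1 ∈ B := h ▸ hy.2
      have h2B : x2 ∉ B := fun hh => hnotboth ⟨h1B, hh⟩
      exact assemble G hll m B c hc hBc x1 x2 hmeq h1B h2B (Or.inl hkey1.symm) huniq
    · have h2B : x2 ∈ B := h ▸ hy.2
      have h1B : x1 ∉ B := fun hh => hnotboth ⟨hh, h2B⟩
      exact assemble G hll m B c hc hBc x2 x1 (by rw [hmeq]; exact Finset.pair_comm x1 x2)
        h2B h1B (Or.inl hkey1) huniq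
  · -- linear source: s x1 = s x2
    have hnotboth : ¬(x1 ∈ B ∧ x2 ∈ B) := by
      rintro ⟨h1, h2⟩
      exact hx12 (cyc_src_inj G hc x1 ((hBc x1).mpr h1) x2 ((hBc x2).mpr h2) hkey1)
    have hyA : y = x1 ∨ y = x2 := by
      have := hy.1
      rw [hmeq] at this
      simpa using this
    rcases hyA with h | h
    · have h1B : x1 ∈ B := h ▸ hy.2
      have h2B : x2 ∉ B := fun hh => hnotboth ⟨h1B, hh⟩
      exact assemble G hll m B c hc hBc x1 x2 hmeq h1B h2B (Or.inr hkey1.symm) huniq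
    · have h2B : x2 ∈ B := h ▸ hy.2
      have h1B : x1 ∉ B := fun hh => hnotboth ⟨hh, h2B⟩
      exact assemble G hll m B c hc hBc x2 x1 (by rw [hmeq]; exact Finset.pair_comm x1 x2)
        h2B h1B (Or.inr hkey1) huniq

end
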